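/- Let k be a positive integer, let S_{k,k} be the symmetric double star graph with central vertices u and v, and let A be its adjacency matrix. Set α = (1+√(1+4k))/2 and β = k/(1+4k+√(1+4k)). Then for every real t, the (u,v) entry of exp(itA) equals i·((1−2β)·sin(αt) + 2β·sin((1−α)t)). -/

import Mathlib

open Matrix

open NormedSpace
open scoped Nat
set_option maxHeartbeats 1000000

noncomputable section

/-- Vertex set of the double star `S_{k,ℓ}`: `Sum.inl 0` is the centre `u`,
`Sum.inl 1` the centre `v`, `Sum.inr (Sum.inl i)` are the pendant neighbours of `u`,
and `Sum.inr (Sum.inr j)` are the pendant neighbours of `v`. -/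
abbrev DSVertex (k l : ℕ) := (Fin 2) ⊕ (Fin k ⊕ Fin l)

/-- The double star graph `S_{k,ℓ}`: the centres `u = Sum.inl 0` and `v = Sum.inl 1` are
adjacent, `u` is adjacent to its `k` pendant vertices and `v` to its `ℓ` pendant vertices. -/
def doubleStar (k l : ℕ) : SimpleGraph (DSVertex k l) :=
  SimpleGraph.fromRel (fun a b =>
    (a = Sum.inl 0 ∧ b = Sum.inl 1) ∨
    (∃ i : Fin k, a = Sum.inl 0 ∧ b = Sum.inr (Sum.inl i)) ∨
    (∃ j : Fin l, a = Sum.inl 1 ∧ b = Sum.inr (Sum.inr j)))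

instance (k l : ℕ) : DecidableRel (doubleStar k l).Adj := fun _ _ => Classical.dec _

/-- The continuous quantum walk `U(t) = exp(itA)`. -/
def qWalk {n : Type*} [Fintype n] [DecidableEq n] (A : Matrix n n ℂ) (t : ℝ) :
    Matrix n n ℂ :=
  NormedSpace.exp ((Complex.I * (t : ℂ)) • A)



theorem exp_smul_idem {𝔸 : Type*} [NormedRing 𝔸] [NormedAlgebra ℂ 𝔸] [CompleteSpace 𝔸]
    (P : 𝔸) (hP : P * P = P) (c : ℂ) :
    exp (c • P) = 1 + (Complex.exp c - 1) • P := by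
  have hpow : ∀ n : ℕ, P ^ (n + 1) = P := by
    intro n; induction n with
    | zero => simp
    | succ n ih => rw [pow_succ, ih, hP]
  have hs : Summable fun n : ℕ => ((n ! : ℂ))⁻¹ • (c • P) ^ n := expSeries_summable' (c • P)
  simp only [exp_eq_tsum ℂ]
  rw [Summable.tsum_eq_zero_add hs]
  simp only [pow_zero, Nat.factorial_zero, Nat.cast_one, inv_one, one_smul]
  congr 1
  have h1 : ∀ n : ℕ, (((n + 1)! : ℂ))⁻¹ • (c • P) ^ (n + 1)
      = ((((n + 1)! : ℂ))⁻¹ * c ^ (n + 1)) • P := by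
    intro n; rw [smul_pow, hpow, smul_smul]
  have hsc : Summable fun n : ℕ => ((n ! : ℂ))⁻¹ * c ^ n := by
    simpa [smul_eq_mul] using expSeries_summable' (𝕂 := ℂ) c
  have hsc' : Summable fun n : ℕ => (((n + 1)! : ℂ))⁻¹ * c ^ (n + 1) :=
    (summable_nat_add_iff 1).2 hsc
  simp_rw [h1]
  rw [Summable.tsum_smul_const hsc']
  congr 1
  have hexp : Complex.exp c = ∑' n : ℕ, ((n ! : ℂ))⁻¹ * c ^ n := by
    rw [Complex.exp_eq_exp_ℂ, exp_eq_tsum ℂ]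
    simp [smul_eq_mul]
  rw [hexp, Summable.tsum_eq_zero_add hsc]
  simp

theorem vecMulVec_mul_vecMulVec' {n : Type*} [Fintype n] (a b c d : n → ℂ) :
    vecMulVec a b * vecMulVec c d = (b ⬝ᵥ c) • vecMulVec a d := by
  ext i j
  simp only [mul_apply, vecMulVec_apply, Matrix.smul_apply, dotProduct, smul_eq_mul]
  rw [Finset.sum_mul]
  exact Finset.sum_congr rfl fun x _ => by ring


/-- A vector on the double star constant on each pendant class. -/
def vc (k : ℕ) (b b' c d : ℂ) : DSVertex k k → ℂ :=
  Sum.elim ![b, b'] (Sum.elim (fun _ => c) (fun _ => d))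

lemma vc_dot (k : ℕ) (b b' c d e e' f g : ℂ) :
    vc k b b' c d ⬝ᵥ vc k e e' f g = b * e + b' * e' + k * (c * f) + k * (d * g) := by
  simp [vc, dotProduct, Fintype.sum_sum_type, Fin.sum_univ_two, Finset.sum_const,
    nsmul_eq_mul, mul_comm]
  ring

lemma PP_idem {n : Type*} [Fintype n] [DecidableEq n] (x : n → ℂ) (m : ℂ) (hm : m ≠ 0)
    (h : x ⬝ᵥ x = m) :
    (m⁻¹ • vecMulVec x x) * (m⁻¹ • vecMulVec x x) = m⁻¹ • vecMulVec x x := by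
  rw [smul_mul_assoc, mul_smul_comm, vecMulVec_mul_vecMulVec', h, smul_smul, smul_smul]
  congr 1
  field_simp

lemma PP_orth {n : Type*} [Fintype n] [DecidableEq n] (x y : n → ℂ) (h : x ⬝ᵥ y = 0)
    (m m' : ℂ) : (m⁻¹ • vecMulVec x x) * (m'⁻¹ • vecMulVec y y) = 0 := by
  rw [smul_mul_assoc, mul_smul_comm, vecMulVec_mul_vecMulVec', h, zero_smul, smul_zero,
    smul_zero]

/-- the four spectral projectors of the symmetric double star -/
def Pm (k : ℕ) (b b' c d m : ℂ) : Matrix (DSVertex k k) (DSVertex k k) ℂ :=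
  m⁻¹ • vecMulVec (vc k b b' c d) (vc k b b' c d)

lemma adj_decomp (k : ℕ) (a : ℂ) (ha : a ≠ 0) (ha1 : a - 1 ≠ 0) (h2 : 2 * a - 1 ≠ 0) :
    ((doubleStar k k).adjMatrix ℂ) =
      a • Pm k a a 1 1 (2*a*(2*a-1))
      + (1-a) • Pm k (1-a) (1-a) 1 1 (2*(2*a-1)*(a-1))
      + (-a) • Pm k (-a) a 1 (-1) (2*a*(2*a-1))
      + (a-1) • Pm k (a-1) (1-a) 1 (-1) (2*(2*a-1)*(a-1)) := by
  have h3 : (2:ℂ)*a*(2*a-1) ≠ 0 := mul_ne_zero (mul_ne_zero two_ne_zero ha) h2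
  have h4 : (2:ℂ)*(2*a-1)*(a-1) ≠ 0 := mul_ne_zero (mul_ne_zero two_ne_zero h2) ha1
  have h2' : a * 2 - 1 ≠ 0 := by rwa [mul_comm]
  ext i j
  rw [SimpleGraph.adjMatrix_apply]
  rcases i with i | i | i <;> rcases j with j | j | j <;>
    first
      | (fin_cases i <;> fin_cases j <;>
          simp [Pm, vc, doubleStar, SimpleGraph.fromRel_adj, vecMulVec_apply, SimpleGraph.adjMatrix_apply] <;>
          simp only [inv_mul_eq_div] <;> field_simp <;> ring)
      | (fin_cases i <;>
          simp [Pm, vc, doubleStar, SimpleGraph.fromRel_adj, vecMulVec_apply, SimpleGraph.adjMatrix_apply] <;>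
          simp only [inv_mul_eq_div] <;> field_simp <;> ring)
      | (fin_cases j <;>
          simp [Pm, vc, doubleStar, SimpleGraph.fromRel_adj, vecMulVec_apply, SimpleGraph.adjMatrix_apply] <;>
          simp only [inv_mul_eq_div] <;> field_simp <;> ring)
      | (simp [Pm, vc, doubleStar, SimpleGraph.fromRel_adj, vecMulVec_apply, SimpleGraph.adjMatrix_apply] <;>
          simp only [inv_mul_eq_div] <;> field_simp <;> ring)

open NormedSpace in
lemma exp_four {n : Type*} [Fintype n] [DecidableEq n] (A P1 P2 P3 P4 : Matrix n n ℂ)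
    (l1 l2 l3 l4 : ℂ)
    (hA : A = l1 • P1 + l2 • P2 + l3 • P3 + l4 • P4)
    (hp1 : P1 * P1 = P1) (hp2 : P2 * P2 = P2) (hp3 : P3 * P3 = P3) (hp4 : P4 * P4 = P4)
    (h12 : P1 * P2 = 0) (h21 : P2 * P1 = 0) (h13 : P1 * P3 = 0) (h31 : P3 * P1 = 0)
    (h14 : P1 * P4 = 0) (h41 : P4 * P1 = 0) (h23 : P2 * P3 = 0) (h32 : P3 * P2 = 0)
    (h24 : P2 * P4 = 0) (h42 : P4 * P2 = 0) (h34 : P3 * P4 = 0) (h43 : P4 * P3 = 0)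
    (c : ℂ) :
    exp (c • A) = 1 + (Complex.exp (c * l1) - 1) • P1 + (Complex.exp (c * l2) - 1) • P2
      + (Complex.exp (c * l3) - 1) • P3 + (Complex.exp (c * l4) - 1) • P4 := by
  letI : SeminormedRing (Matrix n n ℂ) := Matrix.linftyOpSemiNormedRing
  letI : NormedRing (Matrix n n ℂ) := Matrix.linftyOpNormedRing
  letI : NormedAlgebra ℂ (Matrix n n ℂ) := Matrix.linftyOpNormedAlgebra
  have smul0 : ∀ (x y : ℂ) (M N : Matrix n n ℂ), M * N = 0 → (x • M) * (y • N) = 0 := by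
    intro x y M N h
    rw [smul_mul_assoc, mul_smul_comm, h, smul_zero, smul_zero]
  have hc : c • A = (c * l1) • P1 + ((c * l2) • P2 + ((c * l3) • P3 + (c * l4) • P4)) := by
    rw [hA]
    simp only [smul_add, smul_smul]
    abel
  rw [hc]
  have com3 : Commute ((c * l3) • P3) ((c * l4) • P4) := by
    unfold Commute SemiconjBy
    rw [smul0 _ _ _ _ h34, smul0 _ _ _ _ h43]
  have com2 : Commute ((c * l2) • P2) ((c * l3) • P3 + (c * l4) • P4) := by
    unfold Commute SemiconjBy
    rw [mul_add, add_mul, smul0 _ _ _ _ h23, smul0 _ _ _ _ h24,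
      smul0 _ _ _ _ h32, smul0 _ _ _ _ h42]
  have com1 : Commute ((c * l1) • P1) ((c * l2) • P2 + ((c * l3) • P3 + (c * l4) • P4)) := by
    unfold Commute SemiconjBy
    rw [mul_add, add_mul, mul_add, add_mul, smul0 _ _ _ _ h12, smul0 _ _ _ _ h13,
      smul0 _ _ _ _ h14, smul0 _ _ _ _ h21, smul0 _ _ _ _ h31, smul0 _ _ _ _ h41]
  rw [Matrix.exp_add_of_commute _ _ com1, Matrix.exp_add_of_commute _ _ com2,
    Matrix.exp_add_of_commute _ _ com3]
  erw [exp_smul_idem P1 hp1, exp_smul_idem P2 hp2, exp_smul_idem P3 hp3, exp_smul_idem P4 hp4]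
  have m12 := smul0 (Complex.exp (c * l1) - 1) (Complex.exp (c * l2) - 1) _ _ h12
  have m13 := smul0 (Complex.exp (c * l1) - 1) (Complex.exp (c * l3) - 1) _ _ h13
  have m14 := smul0 (Complex.exp (c * l1) - 1) (Complex.exp (c * l4) - 1) _ _ h14
  have m23 := smul0 (Complex.exp (c * l2) - 1) (Complex.exp (c * l3) - 1) _ _ h23
  have m24 := smul0 (Complex.exp (c * l2) - 1) (Complex.exp (c * l4) - 1) _ _ h24
  have m34 := smul0 (Complex.exp (c * l3) - 1) (Complex.exp (c * l4) - 1) _ _ h34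
  simp only [mul_add, add_mul, one_mul, mul_one, m12, m13, m14, m23, m24, m34,
    add_zero, zero_add, mul_zero, zero_mul]
  try abel

/-- the `(u,v)` entry of `exp(itA)` for the symmetric double star `S_{k,k}`,
where `u`, `v` are the central vertices, `α = (1+√(1+4k))/2` and `β = k/(1+4k+√(1+4k))`. -/
theorem Skk_walk_entry (k : ℕ) (hk : 0 < k) (α β : ℝ)
    (hα : α = (1 + Real.sqrt (1 + 4 * k)) / 2)
    (hβ : β = k / (1 + 4 * k + Real.sqrt (1 + 4 * k))) (t : ℝ) :
    qWalk ((doubleStar k k).adjMatrix ℂ) t (Sum.inl 0) (Sum.inl 1) =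
      Complex.I *
        (((1 - 2 * β) * Real.sin (α * t) + 2 * β * Real.sin ((1 - α) * t) : ℝ) : ℂ) := by
  have hk4 : (0:ℝ) ≤ 1 + 4 * k := by positivity
  have hk1 : (1:ℝ) ≤ k := by exact_mod_cast hk
  set s : ℝ := Real.sqrt (1 + 4 * k) with hsdef
  have hs2 : s ^ 2 = 1 + 4 * k := Real.sq_sqrt hk4
  have hs0 : 0 ≤ s := Real.sqrt_nonneg _
  have hs1 : 1 < s := by nlinarith
  have hα1 : 1 < α := by rw [hα]; linarith
  have hαs : 2 * α - 1 = s := by rw [hα]; ring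
  have hαk : (k : ℝ) = α * α - α := by rw [hα]; linear_combination (-1/4 : ℝ) * hs2
  -- complex versions
  set a : ℂ := (α : ℂ) with hadef
  have hk_c : (k : ℂ) = a * a - a := by
    rw [hadef]; exact_mod_cast congrArg (Complex.ofReal) hαk
  have ha : a ≠ 0 := Complex.ofReal_ne_zero.mpr (by linarith)
  have ha1 : a - 1 ≠ 0 := by
    rw [hadef, ← Complex.ofReal_one, ← Complex.ofReal_sub]
    exact Complex.ofReal_ne_zero.mpr (by linarith)
  have h2 : 2 * a - 1 ≠ 0 := by
    rw [hadef, show 2 * (α:ℂ) - 1 = ((2 * α - 1 : ℝ) : ℂ) by push_cast; ring]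
    exact Complex.ofReal_ne_zero.mpr (by rw [hαs]; linarith)
  have h3 : (2:ℂ)*a*(2*a-1) ≠ 0 := mul_ne_zero (mul_ne_zero two_ne_zero ha) h2
  have h4 : (2:ℂ)*(2*a-1)*(a-1) ≠ 0 := mul_ne_zero (mul_ne_zero two_ne_zero h2) ha1
  -- dot products
  have d11 : vc k a a 1 1 ⬝ᵥ vc k a a 1 1 = 2*a*(2*a-1) := by
    rw [vc_dot]; linear_combination 2*hk_c
  have d22 : vc k (1-a) (1-a) 1 1 ⬝ᵥ vc k (1-a) (1-a) 1 1 = 2*(2*a-1)*(a-1) := by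
    rw [vc_dot]; linear_combination 2*hk_c
  have d33 : vc k (-a) a 1 (-1) ⬝ᵥ vc k (-a) a 1 (-1) = 2*a*(2*a-1) := by
    rw [vc_dot]; linear_combination 2*hk_c
  have d44 : vc k (a-1) (1-a) 1 (-1) ⬝ᵥ vc k (a-1) (1-a) 1 (-1) = 2*(2*a-1)*(a-1) := by
    rw [vc_dot]; linear_combination 2*hk_c
  have d12 : vc k a a 1 1 ⬝ᵥ vc k (1-a) (1-a) 1 1 = 0 := by
    rw [vc_dot]; linear_combination 2*hk_c
  have d13 : vc k a a 1 1 ⬝ᵥ vc k (-a) a 1 (-1) = 0 := by rw [vc_dot]; ring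
  have d14 : vc k a a 1 1 ⬝ᵥ vc k (a-1) (1-a) 1 (-1) = 0 := by rw [vc_dot]; ring
  have d23 : vc k (1-a) (1-a) 1 1 ⬝ᵥ vc k (-a) a 1 (-1) = 0 := by rw [vc_dot]; ring
  have d24 : vc k (1-a) (1-a) 1 1 ⬝ᵥ vc k (a-1) (1-a) 1 (-1) = 0 := by rw [vc_dot]; ring
  have d34 : vc k (-a) a 1 (-1) ⬝ᵥ vc k (a-1) (1-a) 1 (-1) = 0 := by
    rw [vc_dot]; linear_combination 2*hk_c
  have d21 : vc k (1-a) (1-a) 1 1 ⬝ᵥ vc k a a 1 1 = 0 := by rw [dotProduct_comm]; exact d12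
  have d31 : vc k (-a) a 1 (-1) ⬝ᵥ vc k a a 1 1 = 0 := by rw [dotProduct_comm]; exact d13
  have d41 : vc k (a-1) (1-a) 1 (-1) ⬝ᵥ vc k a a 1 1 = 0 := by rw [dotProduct_comm]; exact d14
  have d32 : vc k (-a) a 1 (-1) ⬝ᵥ vc k (1-a) (1-a) 1 1 = 0 := by
    rw [dotProduct_comm]; exact d23
  have d42 : vc k (a-1) (1-a) 1 (-1) ⬝ᵥ vc k (1-a) (1-a) 1 1 = 0 := by
    rw [dotProduct_comm]; exact d24
  have d43 : vc k (a-1) (1-a) 1 (-1) ⬝ᵥ vc k (-a) a 1 (-1) = 0 := by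
    rw [dotProduct_comm]; exact d34
  have K := exp_four ((doubleStar k k).adjMatrix ℂ)
    (Pm k a a 1 1 (2*a*(2*a-1))) (Pm k (1-a) (1-a) 1 1 (2*(2*a-1)*(a-1)))
    (Pm k (-a) a 1 (-1) (2*a*(2*a-1))) (Pm k (a-1) (1-a) 1 (-1) (2*(2*a-1)*(a-1)))
    a (1-a) (-a) (a-1) (adj_decomp k a ha ha1 h2)
    (PP_idem _ _ h3 d11) (PP_idem _ _ h4 d22) (PP_idem _ _ h3 d33) (PP_idem _ _ h4 d44)
    (PP_orth _ _ d12 _ _) (PP_orth _ _ d21 _ _) (PP_orth _ _ d13 _ _) (PP_orth _ _ d31 _ _)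
    (PP_orth _ _ d14 _ _) (PP_orth _ _ d41 _ _) (PP_orth _ _ d23 _ _) (PP_orth _ _ d32 _ _)
    (PP_orth _ _ d24 _ _) (PP_orth _ _ d42 _ _) (PP_orth _ _ d34 _ _) (PP_orth _ _ d43 _ _)
    (Complex.I * (t : ℂ))
  unfold qWalk
  rw [K]
  simp only [Matrix.add_apply, Matrix.smul_apply, Matrix.one_apply, Pm, vc,
    vecMulVec_apply, Matrix.smul_apply, smul_eq_mul, Sum.elim_inl, Matrix.cons_val_zero,
    Matrix.cons_val_one, Matrix.head_cons, reduceCtorEq, Sum.inl.injEq, if_false,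
    Fin.isValue, zero_add]
  rw [if_neg (by simp), zero_add]
  have E : ∀ x : ℝ, Complex.exp (Complex.I * (t:ℂ) * (x:ℂ))
      = ((Real.cos (x*t) : ℝ) : ℂ) + ((Real.sin (x*t) : ℝ) : ℂ) * Complex.I := by
    intro x
    rw [show Complex.I * (t:ℂ) * (x:ℂ) = ((x*t : ℝ):ℂ) * Complex.I by push_cast; ring,
      Complex.exp_mul_I]
    rw [Complex.ofReal_cos, Complex.ofReal_sin]
  rw [hadef, show (1 : ℂ) - (α:ℂ) = ((1 - α : ℝ):ℂ) by push_cast; ring,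
    show -(α:ℂ) = ((-α : ℝ):ℂ) by push_cast; ring,
    show (α:ℂ) - 1 = ((α - 1 : ℝ):ℂ) by push_cast; ring,
    E α, E (1-α), E (-α), E (α-1),
    show (-α)*t = -(α*t) by ring, show (α-1)*t = -((1-α)*t) by ring,
    Real.sin_neg, Real.cos_neg, Real.sin_neg, Real.cos_neg]
  -- coefficient identities
  have hne : (1:ℝ) + 4*k + s ≠ 0 := by positivity
  have hk_s : (k:ℝ) = (s^2-1)/4 := by linarith
  have r1 : (1 - 2*β) * (2*α - 1) = α := by
    rw [hβ, hαs, hα, hk_s]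
    have h5 : s + 1 ≠ 0 := by linarith
    have h6 : 1 + (s ^ 2 - 1) + s ≠ 0 := by nlinarith
    field_simp
    ring
  have r2 : (2*β) * (2*α - 1) = α - 1 := by
    rw [hβ, hαs, hα, hk_s]
    have h5 : s + 1 ≠ 0 := by linarith
    have h6 : 1 + (s ^ 2 - 1) + s ≠ 0 := by nlinarith
    field_simp
    ring
  have c1 : ((1:ℂ) - 2*(β:ℂ)) * (2*(α:ℂ) - 1) = (α:ℂ) := by exact_mod_cast r1
  have c2 : (2*(β:ℂ)) * (2*(α:ℂ) - 1) = (α:ℂ) - 1 := by exact_mod_cast r2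
  have e1 : (2*(α:ℂ)*(2*(α:ℂ)-1)) * (2*(α:ℂ)*(2*(α:ℂ)-1))⁻¹ = 1 := by
    apply mul_inv_cancel₀; rw [← hadef]; exact h3
  have e2 : (2*(2*(α:ℂ)-1)*((α:ℂ)-1)) * (2*(2*(α:ℂ)-1)*((α:ℂ)-1))⁻¹ = 1 := by
    apply mul_inv_cancel₀; rw [← hadef]; exact h4
  simp only [Complex.ofReal_add, Complex.ofReal_mul, Complex.ofReal_sub, Complex.ofReal_one,
    Complex.ofReal_ofNat, Complex.ofReal_neg]
  linear_combination (Complex.I * ((Real.sin (α*t) : ℝ):ℂ)) *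
      (((1:ℂ)-2*(β:ℂ)) * e1 - 2*(α:ℂ)*(2*(α:ℂ)*(2*(α:ℂ)-1))⁻¹ * c1)
    + (Complex.I * ((Real.sin ((1-α)*t) : ℝ):ℂ)) *
      ((2*(β:ℂ)) * e2 - 2*((α:ℂ)-1)*(2*(2*(α:ℂ)-1)*((α:ℂ)-1))⁻¹ * c2)
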